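/- Let R be a G-graded ring and ℏ a homogeneous regular normal non-invertible element such that R is ℏ-discrete: for every γ ∈ G there exists n ≥ 0 with (ℏ^n R)_γ = 0. Then R is left G-noetherian (every homogeneous left ideal is finitely generated) if and only if R̄ = R/ℏR is left G-noetherian. -/

import Mathlib

/-!
Let `R` be a `G`-graded ring and `ℏ` a homogeneous regular normal non-invertible element
such that `R` is `ℏ`-discrete.  Then `R` is left `G`-noetherian (every homogeneous left
ideal is finitely generated) iff `R̄ = R/ℏR` is left `G`-noetherian.
Here `R/ℏR` is realized as the quotient of `R` by the ring congruence generated by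
`x ~ y ↔ x - y ∈ Rℏ`, with the induced `G`-grading.
-/

/-- A left ideal of a ring equipped with a family of additive subgroups (a grading) is
*homogeneous* if it is generated by its homogeneous elements. -/
def IsHomogeneousLeftIdeal {ι S : Type*} [Ring S] (ℬ : ι → AddSubgroup S)
    (I : Ideal S) : Prop :=
  I = Ideal.span {x : S | x ∈ I ∧ ∃ γ : ι, x ∈ ℬ γ}

/-- A graded ring (given by a family of additive subgroups) is left `G`-noetherian if
every homogeneous left ideal is finitely generated. -/
def IsLeftGradedNoetherian {ι S : Type*} [Ring S] (ℬ : ι → AddSubgroup S) : Prop :=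
  ∀ I : Ideal S, IsHomogeneousLeftIdeal ℬ I → I.FG

open DirectSum

section Aux

lemma aux_span_hom {ι S : Type*} [Ring S] (ℬ : ι → AddSubgroup S)
    (s : Set S) (h : ∀ x ∈ s, ∃ γ, x ∈ ℬ γ) :
    IsHomogeneousLeftIdeal ℬ (Ideal.span s) := by
  refine le_antisymm (Ideal.span_mono fun x hx => ⟨Ideal.subset_span hx, h x hx⟩) ?_
  rw [Ideal.span_le]
  rintro x ⟨hx, -⟩
  exact hx

lemma aux_hom_iff {G R : Type} [AddCommGroup G] [DecidableEq G] [Ring R]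
    (𝒜 : G → AddSubgroup R) [GradedRing 𝒜] (I : Ideal R) :
    IsHomogeneousLeftIdeal 𝒜 I ↔ Ideal.IsHomogeneous 𝒜 I := by
  constructor
  · intro h
    rw [h]
    exact Ideal.homogeneous_span 𝒜 _ fun x hx => hx.2
  · intro h
    refine le_antisymm ?_ ?_
    · intro x hx
      classical
      rw [← DirectSum.sum_support_decompose 𝒜 x]
      refine Ideal.sum_mem _ fun γ _ => Ideal.subset_span ⟨h γ hx, γ, SetLike.coe_mem _⟩
    · rw [Ideal.span_le]
      rintro x ⟨hx, -⟩
      exact hx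

lemma aux_ring_span {S T : Type*} [Ring S] [Ring T] (f : S →+* T) (s : Set S) (J : Ideal T)
    (h : ∀ x ∈ s, f x ∈ J) : ∀ z ∈ Ideal.span s, f z ∈ J := by
  intro z hz
  induction hz using Submodule.span_induction with
  | mem x hx => exact h x hx
  | zero => simp only [map_zero]; exact J.zero_mem
  | add x y _ _ hx hy => rw [map_add]; exact J.add_mem hx hy
  | smul r x _ hx => rw [smul_eq_mul, map_mul]; exact J.mul_mem_left _ hx

lemma aux_preimage_span {S T : Type*} [Ring S] [Ring T] (f : S →+* T)
    (hf : Function.Surjective f) (s : Set S) {y : T} (hy : y ∈ Ideal.span (f '' s)) :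
    ∃ z ∈ Ideal.span s, f z = y := by
  induction hy using Submodule.span_induction with
  | mem x hx =>
    obtain ⟨z, hz, rfl⟩ := hx
    exact ⟨z, Ideal.subset_span hz, rfl⟩
  | zero => exact ⟨0, Ideal.zero_mem _, map_zero f⟩
  | add x y _ _ hx hy =>
    obtain ⟨z1, h1, rfl⟩ := hx
    obtain ⟨z2, h2, rfl⟩ := hy
    exact ⟨z1 + z2, Ideal.add_mem _ h1 h2, map_add f _ _⟩
  | smul r x _ hx =>
    obtain ⟨z, hz, rfl⟩ := hx
    obtain ⟨r', rfl⟩ := hf r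
    exact ⟨r' * z, Ideal.mul_mem_left _ _ hz, by rw [map_mul, smul_eq_mul]⟩

lemma aux_decompose_mul_left {G R : Type} [AddCommGroup G] [DecidableEq G] [Ring R]
    (𝒜 : G → AddSubgroup R) [GradedRing 𝒜] {a : R} {i : G} (ha : a ∈ 𝒜 i) (t : R) (γ : G) :
    (decompose 𝒜 (a * t) γ : R) = a * (decompose 𝒜 t (γ - i) : R) := by
  induction t using DirectSum.Decomposition.inductionOn 𝒜 with
  | zero => simp
  | @homogeneous j m =>
    by_cases hj : j = γ - i
    · subst hj
      rw [decompose_of_mem_same 𝒜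
          (show a * (m : R) ∈ 𝒜 γ by
            have := SetLike.mul_mem_graded ha m.2
            rwa [show i + (γ - i) = γ by abel] at this),
        decompose_of_mem_same 𝒜 m.2]
    · rw [decompose_of_mem_ne 𝒜 (SetLike.mul_mem_graded ha m.2)
          (show i + j ≠ γ by intro h; exact hj (by rw [← h]; abel)),
        decompose_of_mem_ne 𝒜 m.2 hj, mul_zero]
  | add x y hx hy =>
    simp only [mul_add, decompose_add, DirectSum.add_apply, AddSubgroup.coe_add, hx, hy]

lemma aux_decompose_mul_right {G R : Type} [AddCommGroup G] [DecidableEq G] [Ring R]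
    (𝒜 : G → AddSubgroup R) [GradedRing 𝒜] {a : R} {i : G} (ha : a ∈ 𝒜 i) (t : R) (γ : G) :
    (decompose 𝒜 (t * a) γ : R) = (decompose 𝒜 t (γ - i) : R) * a := by
  induction t using DirectSum.Decomposition.inductionOn 𝒜 with
  | zero => simp
  | @homogeneous j m =>
    by_cases hj : j = γ - i
    · subst hj
      rw [decompose_of_mem_same 𝒜
          (show (m : R) * a ∈ 𝒜 γ by
            have := SetLike.mul_mem_graded m.2 ha
            rwa [show γ - i + i = γ by abel] at this),
        decompose_of_mem_same 𝒜 m.2]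
    · rw [decompose_of_mem_ne 𝒜 (SetLike.mul_mem_graded m.2 ha)
          (show j + i ≠ γ by intro h; exact hj (by rw [← h]; abel)),
        decompose_of_mem_ne 𝒜 m.2 hj, zero_mul]
  | add x y hx hy =>
    simp only [add_mul, decompose_add, DirectSum.add_apply, AddSubgroup.coe_add, hx, hy]

lemma aux_mem_of_mul_mem {G R : Type} [AddCommGroup G] [DecidableEq G] [Ring R]
    (𝒜 : G → AddSubgroup R) [GradedRing 𝒜] {ℏ : R} {ε : G}
    (hhom : ℏ ∈ 𝒜 ε) (hregl : ∀ a : R, ℏ * a = 0 → a = 0) {w : R} {σ : G}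
    (h : ℏ * w ∈ 𝒜 σ) : w ∈ 𝒜 (σ - ε) := by
  classical
  have hcomp : ∀ τ, τ ≠ σ - ε → (decompose 𝒜 w τ : R) = 0 := by
    intro τ hτ
    apply hregl
    have h1 := aux_decompose_mul_left 𝒜 hhom w (τ + ε)
    rw [show τ + ε - ε = τ by abel] at h1
    rw [← h1]
    exact decompose_of_mem_ne 𝒜 h (by intro hh; exact hτ (by rw [hh]; abel))
  rw [← DirectSum.sum_support_decompose 𝒜 w]
  apply AddSubgroup.sum_mem
  intro τ _
  by_cases hτ : τ = σ - ε
  · subst hτ; exact SetLike.coe_mem _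
  · rw [hcomp τ hτ]; exact zero_mem _

lemma aux_exists_bound {Q : Type*} [Ring Q] (J : ℕ → Ideal Q) (mono : Monotone J)
    (V : Finset Q) (h : ∀ v ∈ V, ∃ n, v ∈ J n) : ∃ N, ∀ v ∈ V, v ∈ J N := by
  classical
  induction V using Finset.induction with
  | empty => exact ⟨0, by simp⟩
  | @insert a V ha ih =>
    obtain ⟨N1, hN1⟩ := ih fun v hv => h v (Finset.mem_insert_of_mem hv)
    obtain ⟨n, hn⟩ := h a (Finset.mem_insert_self a V)
    refine ⟨max n N1, ?_⟩
    intro v hv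
    rcases Finset.mem_insert.mp hv with rfl | hv
    · exact mono (le_max_left _ _) hn
    · exact mono (le_max_right _ _) (hN1 v hv)

end Aux

theorem noetherian_iff_quotient_noetherian
    {G R : Type} [AddCommGroup G] [DecidableEq G] [Ring R]
    (𝒜 : G → AddSubgroup R) [GradedRing 𝒜] (ε : G) (ℏ : R)
    (hhom : ℏ ∈ 𝒜 ε)
    (hregl : ∀ a : R, ℏ * a = 0 → a = 0) (hregr : ∀ a : R, a * ℏ = 0 → a = 0)
    (hnormal : Set.range (fun r => ℏ * r) = Set.range (fun r => r * ℏ))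
    (hnoninv : ¬ IsUnit ℏ)
    (hdiscrete : ∀ γ : G, ∃ n : ℕ, ∀ x : R, ℏ ^ n * x ∈ 𝒜 γ → ℏ ^ n * x = 0)
    -- the quotient ring `R̄ = R / ℏR` and its induced grading:
    (c : RingCon R) (hc : c = ringConGen (fun x y => ∃ r : R, x - y = r * ℏ))
    (𝒜bar : G → AddSubgroup c.Quotient)
    (h𝒜bar : ∀ γ, 𝒜bar γ = (𝒜 γ).map (RingCon.mk' c).toAddMonoidHom) :
    IsLeftGradedNoetherian 𝒜 ↔ IsLeftGradedNoetherian 𝒜bar := by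
  classical
  set π : R →+* c.Quotient := RingCon.mk' c with hπ
  have hsurj : Function.Surjective π := fun y => Quot.inductionOn y fun a => ⟨a, rfl⟩
  have hπeq : ∀ x y : R, π x = π y ↔ c x y := fun x y => c.eq
  have hn2 : ∀ a : R, ∃ b, a * ℏ = ℏ * b := by
    intro a
    have : a * ℏ ∈ Set.range (fun r => ℏ * r) := by rw [hnormal]; exact ⟨a, rfl⟩
    obtain ⟨b, hb⟩ := this
    exact ⟨b, hb.symm⟩
  have hn1 : ∀ a : R, ∃ b, ℏ * a = b * ℏ := by
    intro a
    have : ℏ * a ∈ Set.range (fun r => r * ℏ) := by rw [← hnormal]; exact ⟨a, rfl⟩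
    obtain ⟨b, hb⟩ := this
    exact ⟨b, hb.symm⟩
  have hnpow : ∀ (n : ℕ) (a : R), ∃ b, ℏ ^ n * a = b * ℏ ^ n := by
    intro n
    induction n with
    | zero => intro a; exact ⟨a, by simp⟩
    | succ n ih =>
      intro a
      obtain ⟨b, hb⟩ := ih a
      obtain ⟨b', hb'⟩ := hn1 b
      refine ⟨b', ?_⟩
      calc ℏ ^ (n + 1) * a = ℏ * (ℏ ^ n * a) := by rw [pow_succ']; rw [mul_assoc]
        _ = (ℏ * b) * ℏ ^ n := by rw [hb, mul_assoc]
        _ = b' * (ℏ * ℏ ^ n) := by rw [hb', mul_assoc]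
        _ = b' * ℏ ^ (n + 1) := by rw [← pow_succ']
  have hceq : ∀ x y : R, c x y ↔ ∃ t : R, x - y = t * ℏ := by
    intro x y
    constructor
    · rw [hc]
      intro h
      induction h with
      | of x y h => exact h
      | refl x => exact ⟨0, by simp⟩
      | symm _ ih =>
        obtain ⟨t, ht⟩ := ih
        exact ⟨-t, by rw [← neg_sub, ht, neg_mul]⟩
      | trans _ _ ih1 ih2 =>
        obtain ⟨t1, h1⟩ := ih1
        obtain ⟨t2, h2⟩ := ih2
        exact ⟨t1 + t2, by rw [add_mul, ← h1, ← h2]; abel⟩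
      | add _ _ ih1 ih2 =>
        obtain ⟨t1, h1⟩ := ih1
        obtain ⟨t2, h2⟩ := ih2
        exact ⟨t1 + t2, by rw [add_mul, ← h1, ← h2]; abel⟩
      | mul _ _ ih1 ih2 =>
        rename_i a b a' b' _ _
        obtain ⟨t1, h1⟩ := ih1
        obtain ⟨t2, h2⟩ := ih2
        obtain ⟨d, hd⟩ := hn1 b'
        refine ⟨a * t2 + t1 * d, ?_⟩
        have : a * a' - b * b' = a * (a' - b') + (a - b) * b' := by noncomm_ring
        rw [this, h1, h2, add_mul, mul_assoc, mul_assoc, hd, ← mul_assoc, ← mul_assoc]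
    · rintro ⟨t, ht⟩
      rw [hc]
      exact RingConGen.Rel.of _ _ ⟨t, ht⟩
  have hmem_bar : ∀ {γ : G} {x : R}, x ∈ 𝒜 γ → π x ∈ 𝒜bar γ := by
    intro γ x hx
    rw [h𝒜bar]
    exact ⟨x, hx, rfl⟩
  have hbar_mem : ∀ {γ : G} (y : c.Quotient), y ∈ 𝒜bar γ → ∃ x ∈ 𝒜 γ, π x = y := by
    intro γ y hy
    rw [h𝒜bar] at hy
    obtain ⟨x, hx, rfl⟩ := hy
    exact ⟨x, hx, rfl⟩
  constructor
  · -- forward direction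
    intro hR Ibar hIbar
    set s : Set R := {x : R | π x ∈ Ibar ∧ ∃ γ, x ∈ 𝒜 γ} with hs
    obtain ⟨W, hW⟩ := hR (Ideal.span s) (aux_span_hom 𝒜 s fun x hx => hx.2)
    refine ⟨W.image (fun w => π w), ?_⟩
    rw [Finset.coe_image]
    refine le_antisymm ?_ ?_
    · rw [Ideal.span_le]
      rintro _ ⟨w, hw, rfl⟩
      have hws : w ∈ Ideal.span s := hW ▸ Ideal.subset_span hw
      exact aux_ring_span π s Ibar (fun x hx => hx.1) w hws
    · conv_lhs => rw [hIbar]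
      rw [Ideal.span_le]
      rintro y ⟨hy, γ, hyγ⟩
      obtain ⟨x, hxγ, rfl⟩ := hbar_mem y hyγ
      have hxs : x ∈ Ideal.span s := Ideal.subset_span ⟨hy, γ, hxγ⟩
      rw [← hW] at hxs
      exact aux_ring_span π (↑W) (Ideal.span (⇑π '' ↑W))
        (fun w hw => Ideal.subset_span ⟨w, hw, rfl⟩) x hxs
  · -- backward direction
    intro hQ I hI
    have hIH : Ideal.IsHomogeneous 𝒜 I := (aux_hom_iff 𝒜 I).mp hI
    -- the chain of left ideals L n = (I : ℏ^n)
    have Ldef : ∀ n : ℕ, ∃ Ln : Ideal R, ∀ x, x ∈ Ln ↔ ℏ ^ n * x ∈ I := by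
      intro n
      refine ⟨{ carrier := {x | ℏ ^ n * x ∈ I},
                add_mem' := ?_, zero_mem' := ?_, smul_mem' := ?_ }, fun x => Iff.rfl⟩
      · intro a b ha hb
        simp only [Set.mem_setOf_eq, mul_add] at *
        exact I.add_mem ha hb
      · simp only [Set.mem_setOf_eq, mul_zero]
        exact I.zero_mem
      · intro r x hx
        obtain ⟨b, hb⟩ := hnpow n r
        simp only [Set.mem_setOf_eq, smul_eq_mul] at *
        rw [← mul_assoc, hb, mul_assoc]
        exact I.mul_mem_left b hx
    choose L hL using Ldef
    have hL0 : ∀ x, x ∈ L 0 ↔ x ∈ I := by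
      intro x
      rw [hL, pow_zero, one_mul]
    have Lmono : ∀ {m n : ℕ}, m ≤ n → L m ≤ L n := by
      intro m n h x hx
      rw [hL] at hx ⊢
      have heq : ℏ ^ n * x = ℏ ^ (n - m) * (ℏ ^ m * x) := by
        rw [← mul_assoc, ← pow_add]
        congr 2
        omega
      rw [heq]
      exact I.mul_mem_left _ hx
    have LHomog : ∀ n, Ideal.IsHomogeneous 𝒜 (L n) := by
      intro n γ x hx
      rw [hL] at hx ⊢
      have hp : ℏ ^ n ∈ 𝒜 (n • ε) := SetLike.pow_mem_graded n hhom
      have hdec := aux_decompose_mul_left 𝒜 hp x (n • ε + γ)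
      rw [show n • ε + γ - n • ε = γ by abel] at hdec
      rw [← hdec]
      exact hIH _ hx
    set S : ℕ → Set R := fun n => {x | x ∈ L n ∧ ∃ γ, x ∈ 𝒜 γ} with hS
    have Smono : ∀ {m n : ℕ}, m ≤ n → S m ⊆ S n := by
      intro m n h x hx
      exact ⟨Lmono h hx.1, hx.2⟩
    set J : ℕ → Ideal c.Quotient := fun n => Ideal.span (⇑π '' S n) with hJ
    have hJhom : ∀ n, IsHomogeneousLeftIdeal 𝒜bar (J n) := by
      intro n
      refine aux_span_hom 𝒜bar _ ?_
      rintro _ ⟨x, ⟨-, γ, hxγ⟩, rfl⟩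
      exact ⟨γ, hmem_bar hxγ⟩
    have Jmono : Monotone J := fun m n h => Ideal.span_mono (Set.image_mono (Smono h))
    -- stabilization of the chain J
    have hKspan : (⨆ n, J n) = Ideal.span (⇑π '' ⋃ n, S n) := by
      rw [Set.image_iUnion]
      exact (Submodule.span_iUnion _).symm
    have hKhom : IsHomogeneousLeftIdeal 𝒜bar (⨆ n, J n) := by
      rw [hKspan]
      refine aux_span_hom 𝒜bar _ ?_
      rintro _ ⟨x, hx, rfl⟩
      simp only [Set.mem_iUnion] at hx
      obtain ⟨n, -, γ, hxγ⟩ := hx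
      exact ⟨γ, hmem_bar hxγ⟩
    obtain ⟨V, hV⟩ := hQ _ hKhom
    obtain ⟨N, hN⟩ := aux_exists_bound J Jmono V (by
      intro v hv
      exact (Submodule.mem_iSup_of_directed J Jmono.directed_le).mp (hV ▸ Ideal.subset_span hv))
    have hstab : ∀ k, N ≤ k → J k ≤ J N := by
      intro k hk
      calc J k ≤ ⨆ n, J n := le_iSup J k
        _ = Ideal.span ↑V := hV.symm
        _ ≤ J N := Ideal.span_le.mpr hN
    -- finite homogeneous "generating" sets
    have hT : ∀ n : ℕ, ∃ T : Set R, T.Finite ∧ T ⊆ S n ∧ J n = Ideal.span (⇑π '' T) := by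
      intro n
      obtain ⟨V', hV'⟩ := hQ _ (hJhom n)
      have hvmem : ∀ v : {x // x ∈ V'}, ∃ F : Finset c.Quotient,
          ↑F ⊆ ⇑π '' S n ∧ (v : c.Quotient) ∈ Ideal.span (F : Set c.Quotient) := by
        intro v
        have hvJ : (v : c.Quotient) ∈ J n := hV' ▸ Ideal.subset_span v.2
        exact Submodule.mem_span_finite_of_mem_span hvJ
      choose F hF1 hF2 using hvmem
      set U : Set c.Quotient := ⋃ v, (F v : Set c.Quotient) with hU
      have hUfin : U.Finite := Set.finite_iUnion fun v => (F v).finite_toSet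
      have hUsub : U ⊆ ⇑π '' S n := Set.iUnion_subset hF1
      have hJU : J n = Ideal.span U := by
        refine le_antisymm ?_ ?_
        · rw [← hV', Ideal.span_le]
          intro v hv
          exact Ideal.span_mono (Set.subset_iUnion (fun v => (F v : Set c.Quotient)) ⟨v, hv⟩)
            (hF2 ⟨v, hv⟩)
        · rw [Ideal.span_le]
          intro u hu
          exact Ideal.subset_span (hUsub hu)
      have hu : ∀ u : U, ∃ x, x ∈ S n ∧ π x = u := by
        intro u
        obtain ⟨x, hx, he⟩ := hUsub u.2
        exact ⟨x, hx, he⟩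
      choose g hg1 hg2 using hu
      have : Finite U := hUfin
      refine ⟨Set.range g, Set.finite_range g, ?_, ?_⟩
      · rintro x ⟨u, rfl⟩
        exact hg1 u
      · have himg : ⇑π '' Set.range g = U := by
          ext y
          constructor
          · rintro ⟨x, ⟨u, rfl⟩, rfl⟩
            rw [hg2]
            exact u.2
          · intro hy
            exact ⟨g ⟨y, hy⟩, ⟨⟨y, hy⟩, rfl⟩, hg2 _⟩
        rw [himg, ← hJU]
    choose T Tfin Tsub TJ using hT
    have hTL : ∀ m, Ideal.span (T m) ≤ L m :=
      fun m => Ideal.span_le.mpr fun t ht => (Tsub m ht).1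
    have hThom : ∀ m, Ideal.IsHomogeneous 𝒜 (Ideal.span (T m)) :=
      fun m => Ideal.homogeneous_span 𝒜 _ fun x hx => (Tsub m hx).2
    -- candidate finite generating set for I
    set E : Set R := ⋃ (n : ℕ) (_ : n ∈ Set.Iic N), (fun t => ℏ ^ n * t) '' T n with hE
    have hEfin : E.Finite := Set.Finite.biUnion (Set.finite_Iic N) fun n _ => (Tfin n).image _
    have hEI : Ideal.span E ≤ I := by
      rw [Ideal.span_le]
      rintro e he
      simp only [hE, Set.mem_iUnion] at he
      obtain ⟨n, -, t, ht, rfl⟩ := he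
      exact (hL n t).mp (Tsub n ht).1
    have hTspan : ∀ m k : ℕ, m ≤ k → m ≤ N → ∀ z ∈ Ideal.span (T m),
        ℏ ^ k * z ∈ Ideal.span E := by
      intro m k hmk hmN z hz
      induction hz using Submodule.span_induction with
      | mem t ht =>
        have hgen : ℏ ^ m * t ∈ E := by
          simp only [hE, Set.mem_iUnion]
          exact ⟨m, hmN, t, ht, rfl⟩
        have heq : ℏ ^ k * t = ℏ ^ (k - m) * (ℏ ^ m * t) := by
          rw [← mul_assoc, ← pow_add]
          congr 2
          omega
        rw [heq]
        exact Ideal.mul_mem_left _ _ (Ideal.subset_span hgen)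
      | zero => rw [mul_zero]; exact Ideal.zero_mem _
      | add x y _ _ hx hy => rw [mul_add]; exact Ideal.add_mem _ hx hy
      | smul r x _ hx =>
        obtain ⟨b, hb⟩ := hnpow k r
        rw [smul_eq_mul, ← mul_assoc, hb, mul_assoc]
        exact Ideal.mul_mem_left _ _ hx
    -- the main claim: every homogeneous element of I lies in span E
    have main : ∀ (x : R) (γ : G), x ∈ I → x ∈ 𝒜 γ → x ∈ Ideal.span E := by
      intro x γ hxI hxγ
      obtain ⟨M, hM⟩ := hdiscrete γ
      have claim : ∀ j k : ℕ, M + N ≤ k + j → ∀ y, y ∈ L k → y ∈ 𝒜 (γ - k • ε) →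
          ℏ ^ k * y ∈ Ideal.span E := by
        intro j
        induction j with
        | zero =>
          intro k hk y _ hyγ
          have hmem : ℏ ^ k * y ∈ 𝒜 γ := by
            have := SetLike.mul_mem_graded (SetLike.pow_mem_graded k hhom) hyγ
            rwa [show k • ε + (γ - k • ε) = γ by abel] at this
          have h0 : ℏ ^ M * (ℏ ^ (k - M) * y) = ℏ ^ k * y := by
            rw [← mul_assoc, ← pow_add]
            congr 2
            omega
          have hz := hM (ℏ ^ (k - M) * y) (by rw [h0]; exact hmem)
          rw [h0] at hz
          rw [hz]
          exact Ideal.zero_mem _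
        | succ j ih =>
          intro k hk y hy hyγ
          by_cases hk' : M + N ≤ k + j
          · exact ih k hk' y hy hyγ
          set m := min k N with hm
          have hπy : π y ∈ J m := by
            have h1 : π y ∈ J k := Ideal.subset_span ⟨y, ⟨hy, γ - k • ε, hyγ⟩, rfl⟩
            rcases le_total k N with h | h
            · rwa [hm, min_eq_left h]
            · rw [hm, min_eq_right h]
              exact hstab k h h1
          rw [TJ m] at hπy
          obtain ⟨z, hz, hπz⟩ := aux_preimage_span π hsurj (T m) hπy
          obtain ⟨t, ht⟩ := (hceq y z).mp ((hπeq y z).mp hπz.symm)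
          set γk := γ - k • ε with hγk
          set z' : R := (decompose 𝒜 z γk : R) with hz'
          set t' : R := (decompose 𝒜 t (γk - ε) : R) with ht'
          have hz'mem : z' ∈ Ideal.span (T m) := hThom m γk hz
          have hyz : y = z' + t' * ℏ := by
            have hd := congrArg (fun w => (decompose 𝒜 w γk : R)) ht
            simp only [decompose_sub, DirectSum.sub_apply, AddSubgroup.coe_sub] at hd
            rw [decompose_of_mem_same 𝒜 hyγ, aux_decompose_mul_right 𝒜 hhom t γk] at hd
            rw [← ht', ← hz'] at hd
            rw [sub_eq_iff_eq_add.mp hd]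
            abel
          obtain ⟨t'', ht''⟩ := hn2 t'
          have ht''γ : t'' ∈ 𝒜 (γ - (k + 1) • ε) := by
            have h1 : ℏ * t'' ∈ 𝒜 γk := by
              rw [← ht'']
              have := SetLike.mul_mem_graded (SetLike.coe_mem (decompose 𝒜 t (γk - ε))) hhom
              rwa [show γk - ε + ε = γk by abel] at this
            have h2 := aux_mem_of_mul_mem 𝒜 hhom hregl h1
            rwa [show γk - ε = γ - (k + 1) • ε by rw [hγk, succ_nsmul]; abel] at h2
          have hz'Lk : z' ∈ L k := Lmono (min_le_left k N) (hTL m hz'mem)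
          have ht''L : t'' ∈ L (k + 1) := by
            rw [hL]
            have heq : ℏ ^ (k + 1) * t'' = ℏ ^ k * y - ℏ ^ k * z' := by
              rw [pow_succ, mul_assoc, ← ht'', ← mul_sub]
              congr 1
              rw [hyz]
              abel
            rw [heq]
            exact I.sub_mem ((hL k y).mp hy) ((hL k z').mp hz'Lk)
          have h1 : ℏ ^ k * z' ∈ Ideal.span E :=
            hTspan m k (min_le_left _ _) (min_le_right _ _) z' hz'mem
          have h2 : ℏ ^ (k + 1) * t'' ∈ Ideal.span E := ih (k + 1) (by omega) t'' ht''L ht''γ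
          have heq : ℏ ^ k * y = ℏ ^ k * z' + ℏ ^ (k + 1) * t'' := by
            rw [hyz, mul_add, pow_succ, mul_assoc, ← ht'']
          rw [heq]
          exact Ideal.add_mem _ h1 h2
      have hx0 := claim (M + N) 0 (by omega) x ((hL0 x).mpr hxI)
        (by rwa [zero_nsmul, sub_zero])
      rwa [pow_zero, one_mul] at hx0
    refine ⟨hEfin.toFinset, ?_⟩
    rw [Set.Finite.coe_toFinset]
    refine le_antisymm hEI ?_
    conv_lhs => rw [hI]
    rw [Ideal.span_le]
    rintro x ⟨hxI, γ, hxγ⟩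
    exact main x γ hxI hxγ
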